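/- The unitary group U(n) is generated by its orthogonal subgroup O(n) together with the subgroup U(1) = {diag(z,1,...,1) : |z|=1}. -/

import Mathlib

open Matrix

namespace U1Gen

variable {n : ℕ}

/-- The generating set. -/
def S (n : ℕ) : Set (Matrix.unitaryGroup (Fin (n + 1)) ℂ) :=
  {U : Matrix.unitaryGroup (Fin (n + 1)) ℂ |
      ∀ i j, ((U : Matrix (Fin (n + 1)) (Fin (n + 1)) ℂ) i j).im = 0} ∪
   {U : Matrix.unitaryGroup (Fin (n + 1)) ℂ |
      ∃ z : ℂ, ‖z‖ = 1 ∧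
        (U : Matrix (Fin (n + 1)) (Fin (n + 1)) ℂ) =
          Matrix.diagonal (fun i => if i = 0 then z else 1)}

def G (n : ℕ) : Subgroup (Matrix.unitaryGroup (Fin (n + 1)) ℂ) := Subgroup.closure (S n)

lemma real_mem (A : Matrix.unitaryGroup (Fin (n + 1)) ℂ)
    (h : ∀ i j, ((A : Matrix (Fin (n + 1)) (Fin (n + 1)) ℂ) i j).im = 0) : A ∈ G n :=
  Subgroup.subset_closure (Or.inl h)

/-- diagonal unitary membership -/
lemma diag_unitary (d : Fin (n + 1) → ℂ) (hd : ∀ i, ‖d i‖ = 1) :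
    Matrix.diagonal d ∈ Matrix.unitaryGroup (Fin (n + 1)) ℂ := by
  rw [Matrix.mem_unitaryGroup_iff]
  rw [Matrix.star_eq_conjTranspose, Matrix.diagonal_conjTranspose,
    Matrix.diagonal_mul_diagonal]
  have h1 : ∀ i, d i * star (d i) = 1 := by
    intro i
    simp only [RCLike.star_def, Complex.mul_conj]
    norm_cast
    rw [← Complex.sq_norm, hd i, one_pow]
  ext i j
  rcases eq_or_ne i j with rfl | h
  · simpa using h1 i
  · simp [Matrix.diagonal_apply_ne _ h, Matrix.one_apply_ne h]

lemma phase_unitary (k : Fin (n + 1)) (z : ℂ) (hz : ‖z‖ = 1) :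
    Matrix.diagonal (fun i => if i = k then z else 1) ∈ Matrix.unitaryGroup (Fin (n + 1)) ℂ := by
  refine diag_unitary _ fun i => ?_
  split <;> simp [hz]

lemma phase0_mem (z : ℂ) (hz : ‖z‖ = 1) :
    (⟨_, phase_unitary 0 z hz⟩ : Matrix.unitaryGroup (Fin (n + 1)) ℂ) ∈ G n :=
  Subgroup.subset_closure (Or.inr ⟨z, hz, rfl⟩)

lemma perm_unitary (σ : Equiv.Perm (Fin (n + 1))) :
    (σ.permMatrix ℂ) ∈ Matrix.unitaryGroup (Fin (n + 1)) ℂ := by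
  rw [Matrix.mem_unitaryGroup_iff]
  have hstar : star (σ.permMatrix ℂ) = (σ⁻¹.permMatrix ℂ) := by
    ext i j
    simp only [Matrix.star_apply, Equiv.Perm.permMatrix, PEquiv.toMatrix_toPEquiv_eq,
      Matrix.submatrix_apply, id_eq, Matrix.one_apply]
    rw [apply_ite (star : ℂ → ℂ), star_one, star_zero]
    rcases eq_or_ne (σ j) i with h | h
    · subst h; simp
    · rw [if_neg h, if_neg (by rwa [Equiv.Perm.inv_eq_iff_eq, eq_comm])]
  rw [hstar]
  show σ.toPEquiv.toMatrix * (σ⁻¹).toPEquiv.toMatrix = 1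
  rw [PEquiv.toMatrix_toPEquiv_mul]
  ext i j
  simp [Matrix.submatrix_apply, Equiv.toPEquiv_apply, Matrix.one_apply]

lemma perm_mem (σ : Equiv.Perm (Fin (n + 1))) :
    (⟨_, perm_unitary (n := n) σ⟩ : Matrix.unitaryGroup (Fin (n + 1)) ℂ) ∈ G n := by
  refine real_mem _ fun i j => ?_
  simp [Equiv.Perm.permMatrix, PEquiv.toMatrix_toPEquiv_eq, Matrix.one_apply]
  split <;> simp

lemma phase_mem (k : Fin (n + 1)) (z : ℂ) (hz : ‖z‖ = 1) :
    (⟨_, phase_unitary k z hz⟩ : Matrix.unitaryGroup (Fin (n + 1)) ℂ) ∈ G n := by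
  set σ : Equiv.Perm (Fin (n + 1)) := Equiv.swap 0 k with hσ
  set P : Matrix.unitaryGroup (Fin (n + 1)) ℂ := ⟨_, perm_unitary σ⟩ with hP
  have key : (⟨_, phase_unitary k z hz⟩ : Matrix.unitaryGroup (Fin (n + 1)) ℂ)
      = P * ⟨_, phase_unitary 0 z hz⟩ * P := by
    apply Subtype.ext
    show Matrix.diagonal _ = σ.permMatrix ℂ * Matrix.diagonal _ * σ.permMatrix ℂ
    rw [show σ.permMatrix ℂ = σ.toPEquiv.toMatrix from rfl,
      PEquiv.toMatrix_toPEquiv_mul, PEquiv.mul_toMatrix_toPEquiv,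
      Matrix.submatrix_submatrix]
    rw [show σ.symm = σ from Equiv.symm_swap 0 k]
    have : (id ∘ σ : Fin (n+1) → Fin (n+1)) = σ ∧ (σ ∘ id : Fin (n+1) → Fin (n+1)) = σ := ⟨rfl, rfl⟩
    rw [this.1, this.2]
    rw [show ((Matrix.diagonal fun i => if i = 0 then z else 1).submatrix σ σ)
        = Matrix.diagonal ((fun i => if i = 0 then z else 1) ∘ σ) from
      Matrix.submatrix_diagonal_equiv _ σ]
    refine congrArg Matrix.diagonal (funext fun i => ?_)
    show (if i = k then z else 1) = if σ i = 0 then z else 1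
    rcases eq_or_ne i k with rfl | h
    · rw [if_pos rfl, if_pos (Equiv.swap_apply_right 0 i)]
    · have hne : σ i ≠ 0 := by
        intro hc
        apply h
        have h5 := congrArg (⇑σ) hc
        rwa [Equiv.swap_apply_self, Equiv.swap_apply_left] at h5
      rw [if_neg h, if_neg hne]
  rw [key]
  exact mul_mem (mul_mem (perm_mem σ) (phase0_mem z hz)) (perm_mem σ)

lemma diag_mem (d : Fin (n + 1) → ℂ) (hd : ∀ i, ‖d i‖ = 1) :
    (⟨Matrix.diagonal d, diag_unitary d hd⟩ : Matrix.unitaryGroup (Fin (n + 1)) ℂ) ∈ G n := by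
  set l : List (Matrix.unitaryGroup (Fin (n + 1)) ℂ) :=
    (List.finRange (n + 1)).map
      (fun k => (⟨_, phase_unitary k (d k) (hd k)⟩ : Matrix.unitaryGroup (Fin (n + 1)) ℂ)) with hl
  have key : (⟨Matrix.diagonal d, diag_unitary d hd⟩ : Matrix.unitaryGroup (Fin (n + 1)) ℂ)
      = l.prod := by
    apply Subtype.ext
    rw [Submonoid.coe_list_prod, hl, List.map_map]
    have h2 : ((fun (A : Matrix.unitaryGroup (Fin (n + 1)) ℂ) =>
          (A : Matrix (Fin (n+1)) (Fin (n+1)) ℂ)) ∘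
        (fun k => (⟨_, phase_unitary k (d k) (hd k)⟩ : Matrix.unitaryGroup (Fin (n + 1)) ℂ)))
        = (fun k : Fin (n+1) => Matrix.diagonalRingHom (Fin (n+1)) ℂ
            (fun i => if i = k then d k else 1)) := rfl
    rw [h2]
    have h4 : (List.map (fun k : Fin (n+1) => Matrix.diagonalRingHom (Fin (n+1)) ℂ
          (fun i => if i = k then d k else 1)) (List.finRange (n+1)))
        = List.map (⇑(Matrix.diagonalRingHom (Fin (n+1)) ℂ))
            ((List.finRange (n+1)).map (fun k (i : Fin (n+1)) => if i = k then d k else 1)) :=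
      (List.map_map).symm
    rw [h4, ← map_list_prod (Matrix.diagonalRingHom (Fin (n+1)) ℂ)]
    show Matrix.diagonal d = Matrix.diagonal _
    refine congrArg Matrix.diagonal (funext fun i => ?_)
    rw [Pi.list_prod_apply, List.map_map, ← Fin.prod_univ_def]
    show d i = ∏ k : Fin (n+1), if i = k then d k else 1
    rw [Finset.prod_ite_eq]
    simp
  rw [key]
  exact Subgroup.list_prod_mem _ (by
    intro x hx
    rw [hl] at hx
    simp only [List.mem_map] at hx
    obtain ⟨k, -, rfl⟩ := hx
    exact phase_mem k (d k) (hd k))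

/-- Householder-type symmetric matrix. -/
noncomputable def hh (c : ℝ) (u : Fin (n + 1) → ℝ) : Matrix (Fin (n + 1)) (Fin (n + 1)) ℝ :=
  Matrix.of fun i j => (if i = j then 1 else 0) - c * u i * u j

lemma hh_mul_hh (c : ℝ) (u : Fin (n + 1) → ℝ) (hc : c * ∑ l, u l * u l = 2) :
    hh c u * hh c u = 1 := by
  ext i j
  rw [Matrix.mul_apply]
  have hterm : ∀ l, hh c u i l * hh c u l j
      = ((if i = l then (1:ℝ) else 0) * (if l = j then (1:ℝ) else 0)
        - (if i = l then c * u l * u j else 0)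
        - (if l = j then c * u i * u l else 0))
        + (c * u i) * (c * u j) * (u l * u l) := by
    intro l
    show ((if i = l then (1:ℝ) else 0) - c * u i * u l) * ((if l = j then (1:ℝ) else 0) - c * u l * u j) = _
    split_ifs <;> ring
  rw [Finset.sum_congr rfl fun l _ => hterm l]
  rw [Finset.sum_add_distrib, Finset.sum_sub_distrib, Finset.sum_sub_distrib]
  rw [← Finset.mul_sum]
  simp only [boole_mul, Finset.sum_ite_eq, Finset.sum_ite_eq', Finset.mem_univ, if_pos]
  have h2 : c * u i * (c * u j) * ∑ l, u l * u l = c * u i * u j * 2 := by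
    rw [show c * u i * (c * u j) * ∑ l, u l * u l = u i * u j * (c * (c * ∑ l, u l * u l)) by ring,
      hc]
    ring
  rw [show (c*u i) * (c*u j) * ∑ l, u l * u l = c * u i * (c * u j) * ∑ l, u l * u l by ring, h2]
  rw [Matrix.one_apply]
  rcases eq_or_ne i j with rfl | h <;> simp [*] <;> ring

lemma hh_symm (c : ℝ) (u : Fin (n + 1) → ℝ) : (hh c u)ᵀ = hh c u := by
  ext i j
  show ((if j = i then (1:ℝ) else 0) - c * u j * u i) = (if i = j then (1:ℝ) else 0) - c * u i * u j
  rcases eq_or_ne i j with rfl | h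
  · ring
  · rw [if_neg h, if_neg (Ne.symm h)]; ring

lemma hh_unitary (c : ℝ) (u : Fin (n + 1) → ℝ) (hc : c * ∑ l, u l * u l = 2) :
    (hh c u).map ⇑Complex.ofRealHom ∈ Matrix.unitaryGroup (Fin (n + 1)) ℂ := by
  rw [Matrix.mem_unitaryGroup_iff]
  have hstar : star ((hh c u).map ⇑Complex.ofRealHom) = (hh c u).map ⇑Complex.ofRealHom := by
    ext i j
    rw [Matrix.star_apply, Matrix.map_apply, Matrix.map_apply,
      show hh c u j i = hh c u i j from congrFun (congrFun (hh_symm c u) i) j]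
    exact Complex.conj_ofReal _
  rw [hstar, ← Matrix.map_mul, hh_mul_hh c u hc]
  simp

lemma step (U : Matrix.unitaryGroup (Fin (n + 1)) ℂ) (k : Fin (n + 1))
    (hU : ∀ j, j < k → ∀ i, (U : Matrix (Fin (n+1)) (Fin (n+1)) ℂ) i j
      = if i = j then 1 else 0) :
    ∃ g ∈ G n, ∀ j, j ≤ k → ∀ i,
      ((g * U : Matrix.unitaryGroup (Fin (n + 1)) ℂ) : Matrix (Fin (n+1)) (Fin (n+1)) ℂ) i j
      = if i = j then 1 else 0 := by
  set A : Matrix (Fin (n+1)) (Fin (n+1)) ℂ := (U : Matrix (Fin (n+1)) (Fin (n+1)) ℂ) with hA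
  set v : Fin (n+1) → ℂ := fun i => A i k with hv
  -- entries of star A * A
  have hSS : ∀ j, (star A * A) j k = (1 : Matrix (Fin (n+1)) (Fin (n+1)) ℂ) j k := by
    intro j
    rw [U.2.1]
  -- column k is orthogonal to earlier columns
  have hcol : ∀ j, j < k → v j = 0 := by
    intro j hj
    have h2 := hSS j
    rw [Matrix.mul_apply, Matrix.one_apply_ne (ne_of_lt hj)] at h2
    rw [Finset.sum_congr rfl (fun i _ => by
      rw [Matrix.star_apply, hU j hj i, apply_ite (star : ℂ → ℂ), star_one, star_zero,
        boole_mul])] at h2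
    rwa [Finset.sum_ite_eq' Finset.univ j (fun i => A i k), if_pos (Finset.mem_univ j)] at h2
  -- column k has norm 1
  have hnorm : ∑ i, ‖v i‖ ^ 2 = 1 := by
    have h2 := hSS k
    rw [Matrix.mul_apply, Matrix.one_apply_eq] at h2
    have h4 : ∀ i : Fin (n+1), star (A i k) * A i k = ((‖v i‖ ^ 2 : ℝ) : ℂ) := by
      intro i
      rw [mul_comm, RCLike.star_def, Complex.mul_conj, ← Complex.sq_norm]
    simp only [Matrix.star_apply] at h2
    rw [Finset.sum_congr rfl (fun i _ => h4 i), ← Complex.ofReal_sum] at h2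
    exact_mod_cast h2
  -- the phase vector
  set w : Fin (n+1) → ℝ := fun i => ‖v i‖ with hw
  set d : Fin (n+1) → ℂ := fun i => if v i = 0 then 1 else (starRingEnd ℂ) (v i) / (w i : ℂ)
    with hd
  have habs : ∀ i, ‖d i‖ = 1 := by
    intro i
    rw [hd]
    dsimp only
    split_ifs with h
    · simp
    · rw [norm_div, Complex.norm_conj, Complex.norm_real, hw]
      dsimp only
      rw [Real.norm_of_nonneg (norm_nonneg _), div_self (by simpa using h)]
  have hdv : ∀ i, d i * v i = (w i : ℂ) := by
    intro i
    rw [hd]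
    dsimp only
    split_ifs with h
    · rw [h, mul_zero, hw]
      dsimp only
      rw [h]
      simp
    · rw [div_mul_eq_mul_div, mul_comm, Complex.mul_conj, ← Complex.sq_norm, sq, hw]
      dsimp only
      push_cast
      rw [mul_div_assoc, div_self (Complex.ofReal_ne_zero.mpr (by simpa using h)), mul_one]
  have hd1 : ∀ j, j < k → d j = 1 := by
    intro j hj
    rw [hd]
    dsimp only
    rw [if_pos (hcol j hj)]
  set D : Matrix.unitaryGroup (Fin (n+1)) ℂ := ⟨Matrix.diagonal d, diag_unitary d habs⟩ with hD
  have hDG : D ∈ G n := diag_mem d habs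
  have hB : ∀ i j, ((D * U : Matrix.unitaryGroup (Fin (n+1)) ℂ)
      : Matrix (Fin (n+1)) (Fin (n+1)) ℂ) i j = d i * A i j := by
    intro i j
    rw [Matrix.UnitaryGroup.mul_val, hD]
    exact Matrix.diagonal_mul d A i j
  have hBj : ∀ j, j < k → ∀ i, ((D * U : Matrix.unitaryGroup (Fin (n+1)) ℂ)
      : Matrix (Fin (n+1)) (Fin (n+1)) ℂ) i j = if i = j then 1 else 0 := by
    intro j hj i
    rw [hB i j, hU j hj i]
    rcases eq_or_ne i j with rfl | h
    · simp [hd1 i hj]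
    · simp [h]
  have hBk : ∀ i, ((D * U : Matrix.unitaryGroup (Fin (n+1)) ℂ)
      : Matrix (Fin (n+1)) (Fin (n+1)) ℂ) i k = (w i : ℂ) := by
    intro i
    rw [hB i k, hdv i]
  by_cases hwk : w k = 1
  · -- the column is already real; D suffices
    have hzero : ∀ i, i ≠ k → w i = 0 := by
      intro i hik
      have h5 : ∑ l ∈ Finset.univ.erase k, w l ^ 2 = 0 := by
        have h6 := Finset.add_sum_erase Finset.univ (fun l => w l ^ 2) (Finset.mem_univ k)
        rw [hnorm, hwk] at h6
        linarith
      have h7 := (Finset.sum_eq_zero_iff_of_nonneg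
        (fun l _ => sq_nonneg (w l))).mp h5 i (Finset.mem_erase.mpr ⟨hik, Finset.mem_univ i⟩)
      exact (pow_eq_zero_iff two_ne_zero).mp h7
    refine ⟨D, hDG, fun j hj i => ?_⟩
    rcases lt_or_eq_of_le hj with hlt | rfl
    · exact hBj j hlt i
    · rw [hBk i]
      rcases eq_or_ne i j with rfl | h
      · rw [if_pos rfl, hwk]
        norm_num
      · rw [if_neg h, hzero i h]
        norm_num
  · -- use a Householder reflection
    have hwknn : 0 ≤ w k := norm_nonneg _
    have hwkle : w k ≤ 1 := by
      nlinarith [Finset.single_le_sum (f := fun l => w l ^ 2)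
        (fun l _ => sq_nonneg (w l)) (Finset.mem_univ k)]
    have hpos : 0 < 1 - w k := by
      rcases lt_or_eq_of_le hwkle with h | h
      · linarith
      · exact absurd h hwk
    set c : ℝ := (1 - w k)⁻¹ with hc
    set u : Fin (n+1) → ℝ := fun i => w i - if i = k then 1 else 0 with hu
    have hsuu : ∑ l, u l * u l = 2 * (1 - w k) := by
      have e1 : ∀ l, u l * u l = w l ^ 2 - (if l = k then 2 * w l - 1 else 0) := by
        intro l
        rw [hu]
        dsimp only
        split_ifs <;> ring
      rw [Finset.sum_congr rfl fun l _ => e1 l, Finset.sum_sub_distrib, hnorm,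
        Finset.sum_ite_eq' Finset.univ k (fun l => 2 * w l - 1), if_pos (Finset.mem_univ k)]
      ring
    have hc2 : c * ∑ l, u l * u l = 2 := by
      rw [hsuu, hc]
      field_simp
    set Rm : Matrix (Fin (n+1)) (Fin (n+1)) ℂ := (hh c u).map ⇑Complex.ofRealHom with hRm
    set R : Matrix.unitaryGroup (Fin (n+1)) ℂ := ⟨Rm, hh_unitary c u hc2⟩ with hR
    have hRG : R ∈ G n := by
      refine real_mem _ fun i j => ?_
      rw [hR]
      exact Complex.ofReal_im _
    refine ⟨R * D, mul_mem hRG hDG, fun j hj i => ?_⟩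
    have hcoe : ((R * D * U : Matrix.unitaryGroup (Fin (n+1)) ℂ)
        : Matrix (Fin (n+1)) (Fin (n+1)) ℂ) i j
        = ∑ l, Rm i l * ((D * U : Matrix.unitaryGroup (Fin (n+1)) ℂ)
            : Matrix (Fin (n+1)) (Fin (n+1)) ℂ) l j := by
      rw [mul_assoc, Matrix.UnitaryGroup.mul_val, Matrix.mul_apply]
    rcases lt_or_eq_of_le hj with hlt | rfl
    · -- earlier columns are preserved
      rw [hcoe, Finset.sum_congr rfl (fun l _ => by rw [hBj j hlt l, mul_boole]),
        Finset.sum_ite_eq' Finset.univ j (fun l => Rm i l), if_pos (Finset.mem_univ j)]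
      have huj : u j = 0 := by
        rw [hu]
        dsimp only
        rw [if_neg (ne_of_lt hlt), hw]
        dsimp only
        rw [hcol j hlt]
        simp
      rw [hRm]
      show (((hh c u) i j : ℝ) : ℂ) = _
      rw [show hh c u i j = if i = j then 1 else 0 from by
        show (if i = j then (1:ℝ) else 0) - c * u i * u j = _
        rw [huj]
        ring]
      split_ifs <;> simp
    · -- column k becomes e_k
      rw [hcoe, Finset.sum_congr rfl (fun l _ => by rw [hBk l])]
      have hcast : ∀ l, Rm i l * ((w l : ℝ) : ℂ) = ((hh c u i l * w l : ℝ) : ℂ) := by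
        intro l
        rw [hRm]
        push_cast
        rfl
      rw [Finset.sum_congr rfl fun l _ => hcast l, ← Complex.ofReal_sum]
      have hsum2 : ∑ l, hh c u i l * w l = (if i = j then 1 else 0 : ℝ) := by
        have e1 : ∀ l, hh c u i l * w l = (if i = l then w l else 0) - c * u i * (u l * w l) := by
          intro l
          show ((if i = l then (1:ℝ) else 0) - c * u i * u l) * w l = _
          split_ifs <;> ring
        have e2 : ∑ l, u l * w l = 1 - w j := by
          have e3 : ∀ l, u l * w l = w l ^ 2 - (if l = j then w l else 0) := by
            intro l
            rw [hu]
            dsimp only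
            split_ifs <;> ring
          rw [Finset.sum_congr rfl fun l _ => e3 l, Finset.sum_sub_distrib, hnorm,
            Finset.sum_ite_eq' Finset.univ j (fun l => w l), if_pos (Finset.mem_univ j)]
        rw [Finset.sum_congr rfl fun l _ => e1 l, Finset.sum_sub_distrib,
          Finset.sum_ite_eq Finset.univ i (fun l => w l), if_pos (Finset.mem_univ i),
          ← Finset.mul_sum, e2]
        have e4 : c * u i * (1 - w j) = u i := by
          rw [hc, mul_comm ((1 - w j)⁻¹) (u i), mul_assoc,
            inv_mul_cancel₀ (ne_of_gt hpos), mul_one]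
        rw [e4, hu]
        dsimp only
        split_ifs <;> ring
      rw [hsum2]
      split_ifs <;> simp



lemma aux (m : ℕ) : ∀ U : Matrix.unitaryGroup (Fin (n + 1)) ℂ,
    (∀ j : Fin (n + 1), (j : ℕ) < n + 1 - m → ∀ i,
      (U : Matrix (Fin (n+1)) (Fin (n+1)) ℂ) i j = if i = j then 1 else 0) → U ∈ G n := by
  induction m with
  | zero =>
    intro U hU
    have hU1 : U = 1 := by
      apply Subtype.ext
      ext i j
      rw [hU j (by omega) i,
        show ((1 : Matrix.unitaryGroup (Fin (n+1)) ℂ) : Matrix (Fin (n+1)) (Fin (n+1)) ℂ) = 1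
          from rfl, Matrix.one_apply]
    rw [hU1]
    exact one_mem _
  | succ m ih =>
    intro U hU
    set k : Fin (n + 1) := ⟨n - m, by omega⟩ with hk
    have hkv : (k : ℕ) = n - m := rfl
    obtain ⟨g, hg, hcols⟩ := step U k (fun j hj i => hU j (by
      have h9 := (Fin.lt_def).mp hj
      rw [hkv] at h9
      omega) i)
    have hgU : g * U ∈ G n := ih (g * U) (fun j hj i => hcols j (by
      rw [Fin.le_def, hkv]
      omega) i)
    have hU2 : U = g⁻¹ * (g * U) := by
      rw [← mul_assoc, inv_mul_cancel, one_mul]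
    rw [hU2]
    exact mul_mem (inv_mem hg) hgU

lemma G_eq_top : G n = ⊤ := by
  rw [Subgroup.eq_top_iff']
  intro U
  exact aux (n + 1) U (fun j hj i => absurd hj (by omega))

end U1Gen

open Matrix

/-- The unitary group `U(n)` is generated by its orthogonal subgroup `O(n)` (the unitary
matrices with real entries) together with the embedded subgroup
`U(1) = {diag(z,1,…,1) : |z| = 1}`. -/
theorem unitaryGroup_generated_by_orthogonal_and_U1 (n : ℕ) :
    Subgroup.closure
      ({U : Matrix.unitaryGroup (Fin (n + 1)) ℂ |
          ∀ i j, ((U : Matrix (Fin (n + 1)) (Fin (n + 1)) ℂ) i j).im = 0} ∪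
       {U : Matrix.unitaryGroup (Fin (n + 1)) ℂ |
          ∃ z : ℂ, ‖z‖ = 1 ∧
            (U : Matrix (Fin (n + 1)) (Fin (n + 1)) ℂ) =
              Matrix.diagonal (fun i => if i = 0 then z else 1)}) = ⊤ :=
  U1Gen.G_eq_top
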